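/- Let F₀ = ℚ(p, x₀, x₁, x₂, x₃). In the formal power series ring F₀[[X]] one has (1−x₀X)(1−x₀x₁x₂x₃X) · Σ_{δ≥0} ( Σ_{0≤δ₁≤δ₂≤δ₃≤δ} p^{3δ₁+2δ₂+δ₃} (x₁x₂x₃/p⁶)^{δ₁} ω(δ₂−δ₁, δ₃−δ₁) ) (x₀X)^δ = Σ_{μ≥0} ( Σ_{0≤λ≤μ} ω(λ,μ) p^{2λ+μ} ) (x₀X)^μ, i.e. the full generating series factors through the two-variable spherical sum after removing the factors (1−x₀X)⁻¹ and (1−x₀x₁x₂x₃X)⁻¹. -/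

import Mathlib

/-! Common setup: the field `F₀ = ℚ(p, x₀, x₁, x₂, x₃)`, realized as the fraction field of the
polynomial ring `ℚ[p, x₀, x₁, x₂, x₃]`.  `p` has index `0`, `x₀` has index `1`, and `x i`
(for `i : Fin 3`) are the variables `x₁, x₂, x₃`. -/

noncomputable section

/-- The rational function field `ℚ(p, x₀, x₁, x₂, x₃)`. -/
abbrev F₀ : Type := FractionRing (MvPolynomial (Fin 5) ℚ)

/-- The indeterminate `p`. -/
def p : F₀ := algebraMap (MvPolynomial (Fin 5) ℚ) F₀ (MvPolynomial.X 0)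

/-- The indeterminate `x₀`. -/
def x₀ : F₀ := algebraMap (MvPolynomial (Fin 5) ℚ) F₀ (MvPolynomial.X 1)

/-- The indeterminates `x₁, x₂, x₃` (as `x 0, x 1, x 2`). -/
def x (i : Fin 3) : F₀ := algebraMap (MvPolynomial (Fin 5) ℚ) F₀ (MvPolynomial.X i.succ.succ)

/-- The monomial symmetric polynomial `sym_{a,b,c}` in `x₁, x₂, x₃`: the sum of all *distinct*
monomials obtained from `x₁^a x₂^b x₃^c` by permuting the variables. -/
def sym (a b c : ℕ) : F₀ :=
  ∑ e ∈ Finset.univ.image (fun σ : Equiv.Perm (Fin 3) => (![a, b, c]) ∘ σ),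
    ∏ j, x j ^ e j

/-- Andrianov's formula for the Satake spherical image `ω(λ,μ) = ω(t(1, p^λ, p^μ))`
of the `GL₃` Hecke operator `t(1, p^λ, p^μ)`, for `0 ≤ λ ≤ μ`. -/
def ω (l m : ℕ) : F₀ :=
  ((if l = 0 ∧ m = 0 then p ^ 3 / ((p + 1) * (p ^ 2 + p + 1))
    else if l = 0 ∨ l = m then p / (p + 1)
    else 1) / p ^ (2 * l + m)) *
  ∑ σ : Equiv.Perm (Fin 3),
    x (σ 1) ^ l * x (σ 2) ^ m *
      ((x (σ 1) - x (σ 0) / p) * (x (σ 2) - x (σ 0) / p) * (x (σ 2) - x (σ 1) / p)) /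
      ((x (σ 1) - x (σ 0)) * (x (σ 2) - x (σ 0)) * (x (σ 2) - x (σ 1)))

/-- The polynomial `P(X)` (numerator of the Shimura/Andrianov generating series for `Sp₃`),
as a formal power series in `X` over `F₀`. -/
def P : PowerSeries F₀ :=
  1 - PowerSeries.C (R := F₀) ((sym 2 1 1 / p + (p ^ 2 + p + 1) * sym 1 1 1 / p ^ 2 + sym 1 1 0 / p)
        * x₀ ^ 2) * PowerSeries.X ^ 2
    + PowerSeries.C (R := F₀) (((p + 1) / p ^ 2) * (sym 2 2 2 + sym 2 2 1 + sym 2 1 1 + sym 1 1 1)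
        * x₀ ^ 3) * PowerSeries.X ^ 3
    - PowerSeries.C (R := F₀) ((sym 3 2 2 / p ^ 2 + (p ^ 2 + p + 1) * sym 2 2 2 / p ^ 3
        + sym 2 2 1 / p ^ 2) * x₀ ^ 4) * PowerSeries.X ^ 4
    + PowerSeries.C (R := F₀) ((sym 3 3 3 / p ^ 3) * x₀ ^ 6) * PowerSeries.X ^ 6

/-- The spherical image of the generating series `Σ_δ Ω(T(p^δ)) X^δ` of Hecke operators for
`Sp₃`: the coefficient of `X^δ` is
`Σ_{0 ≤ δ₁ ≤ δ₂ ≤ δ₃ ≤ δ} p^{3δ₁+2δ₂+δ₃} (x₁x₂x₃/p⁶)^{δ₁} ω(δ₂−δ₁, δ₃−δ₁) · x₀^δ`. -/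
def R : PowerSeries F₀ :=
  PowerSeries.mk fun δ =>
    (∑ d₃ ∈ Finset.range (δ + 1), ∑ d₂ ∈ Finset.range (d₃ + 1), ∑ d₁ ∈ Finset.range (d₂ + 1),
      p ^ (3 * d₁ + 2 * d₂ + d₃) * (x 0 * x 1 * x 2 / p ^ 6) ^ d₁ * ω (d₂ - d₁) (d₃ - d₁))
    * x₀ ^ δ

/-- Auxiliary: `y = x₁x₂x₃`. -/
def yy : F₀ := x 0 * x 1 * x 2

/-- Auxiliary: a single summand of the triple sum. -/
def A (d₁ d₂ d₃ : ℕ) : F₀ :=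
  p ^ (3 * d₁ + 2 * d₂ + d₃) * (x 0 * x 1 * x 2 / p ^ 6) ^ d₁ * ω (d₂ - d₁) (d₃ - d₁)

def Bb (d₃ : ℕ) : F₀ := ∑ d₂ ∈ Finset.range (d₃ + 1), ∑ d₁ ∈ Finset.range (d₂ + 1), A d₁ d₂ d₃

def S (δ : ℕ) : F₀ := ∑ d₃ ∈ Finset.range (δ + 1), Bb d₃

def T (μ : ℕ) : F₀ := ∑ l ∈ Finset.range (μ + 1), ω l μ * p ^ (2 * l + μ)

lemma p_ne_zero : p ≠ 0 := by
  intro h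
  have h2 := (map_eq_zero_iff _
    (IsFractionRing.injective (MvPolynomial (Fin 5) ℚ) F₀)).mp h
  exact MvPolynomial.X_ne_zero (0 : Fin 5) h2

lemma A_succ (d₁ d₂ d₃ : ℕ) : A (d₁+1) (d₂+1) (d₃+1) = yy * A d₁ d₂ d₃ := by
  have h6 : (p : F₀) ^ 6 ≠ 0 := pow_ne_zero _ p_ne_zero
  unfold A yy
  rw [show 3*(d₁+1)+2*(d₂+1)+(d₃+1) = (3*d₁+2*d₂+d₃)+6 by ring, Nat.succ_sub_succ,
    Nat.succ_sub_succ]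
  have hy : p ^ 6 * (x 0 * x 1 * x 2 / p ^ 6) = x 0 * x 1 * x 2 := by field_simp [p_ne_zero]
  calc p ^ (3*d₁+2*d₂+d₃+6) * (x 0 * x 1 * x 2 / p ^ 6) ^ (d₁+1) * ω (d₂ - d₁) (d₃ - d₁)
      = (p ^ 6 * (x 0 * x 1 * x 2 / p ^ 6)) *
        (p ^ (3*d₁+2*d₂+d₃) * (x 0 * x 1 * x 2 / p ^ 6) ^ d₁ * ω (d₂ - d₁) (d₃ - d₁)) := by
        rw [pow_add, pow_succ]; ring
    _ = _ := by rw [hy]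

lemma A_zero (d₂ d₃ : ℕ) : A 0 d₂ d₃ = ω d₂ d₃ * p ^ (2 * d₂ + d₃) := by
  simp [A]; ring

lemma Bb_succ (δ : ℕ) : Bb (δ+1) = T (δ+1) + yy * Bb δ := by
  unfold Bb
  rw [Finset.sum_congr rfl (fun d₂ _ => Finset.sum_range_succ' (fun d₁ => A d₁ d₂ (δ+1)) d₂),
    Finset.sum_add_distrib, add_comm]
  congr 1
  · unfold T
    exact Finset.sum_congr rfl fun d₂ _ => A_zero d₂ (δ+1)
  · rw [Finset.sum_range_succ' (fun d₂ => ∑ d₁ ∈ Finset.range d₂, A (d₁+1) d₂ (δ+1)) (δ+1)]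
    simp only [Finset.range_zero, Finset.sum_empty, add_zero, A_succ, ← Finset.mul_sum]

lemma Bb_zero : Bb 0 = T 0 := by
  simp [Bb, T, A_zero]

lemma S_succ (δ : ℕ) : S (δ+1) = S δ + Bb (δ+1) := Finset.sum_range_succ _ _

lemma coeff_one_sub_C_mul_X_mul (c : F₀) (f : PowerSeries F₀) :
    ∀ n, PowerSeries.coeff n ((1 - PowerSeries.C c * PowerSeries.X) * f)
      = PowerSeries.coeff n f - c * (if h : n = 0 then 0 else PowerSeries.coeff (n-1) f)
  | 0 => by simp
  | (n+1) => by
    rw [sub_mul, one_mul, map_sub, mul_assoc, PowerSeries.coeff_C_mul,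
      PowerSeries.coeff_succ_X_mul]
    simp

lemma R_eq : R = PowerSeries.mk fun δ => S δ * x₀ ^ δ := rfl

/-- in `F₀⟦X⟧`,
`(1−x₀X)(1−x₀x₁x₂x₃X) · Σ_δ Ω(T(p^δ)) X^δ = Σ_μ (Σ_{0≤λ≤μ} ω(λ,μ) p^{2λ+μ}) (x₀X)^μ`. -/
theorem two_factors_mul_heckeSeries :
    ((1 - PowerSeries.C (R := F₀) x₀ * PowerSeries.X)
      * (1 - PowerSeries.C (R := F₀) (x₀ * x 0 * x 1 * x 2) * PowerSeries.X)) * R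
    = PowerSeries.mk fun μ =>
        (∑ l ∈ Finset.range (μ + 1), ω l μ * p ^ (2 * l + μ)) * x₀ ^ μ := by
  have hR : R = PowerSeries.mk fun δ => S δ * x₀ ^ δ := rfl
  have hT : (PowerSeries.mk fun μ =>
      (∑ l ∈ Finset.range (μ + 1), ω l μ * p ^ (2 * l + μ)) * x₀ ^ μ)
      = PowerSeries.mk fun μ => T μ * x₀ ^ μ := rfl
  rw [mul_assoc, hR, hT]
  ext n
  rw [coeff_one_sub_C_mul_X_mul, coeff_one_sub_C_mul_X_mul, coeff_one_sub_C_mul_X_mul]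
  simp only [PowerSeries.coeff_mk]
  match n with
  | 0 => simp [S, Bb_zero, T]
  | 1 =>
      have h1 : S 1 = S 0 + Bb 1 := S_succ 0
      have h2 : Bb 1 = T 1 + yy * Bb 0 := Bb_succ 0
      have h0 : S 0 = Bb 0 := by simp [S]
      norm_num [h1, h2, h0, yy]
      ring
  | (k+2) =>
      have h1 : S (k+2) = S (k+1) + Bb (k+2) := S_succ (k+1)
      have h2 : S (k+1) = S k + Bb (k+1) := S_succ k
      have h3 : Bb (k+2) = T (k+2) + yy * Bb (k+1) := Bb_succ (k+1)
      norm_num [show k+2-1 = k+1 from rfl, h1, h2, h3, yy]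
      ring
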